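/- arXiv:2306.14468 — 2 statements merged into one kernel-verified Lean document; each statement's English description precedes it below -/
import Mathlib

section
/- Let $\phi_1, \dots, \phi_K \in \mathbb{R}^d$ with $\|\phi_i\|_2 \le 1$, let $\theta_1, \dots, \theta_K, \theta^* \in \mathbb{R}^d$ with $\|\theta_i\|_2 \le 1$ and $\|\theta^*\|_2 \le 1$, and let $\beta > 0$. Suppose that for every $k \in \{1,\dots,K\}$, $\sum_{i=1}^{k-1} \left((\theta_k - \theta^*)^T \phi_i\right)^2 \le \beta$. Then for every $k \in \{1,\dots,K\}$, $\sum_{i=1}^{k} \left((\theta_i - \theta^*)^T \phi_i\right)^2 \le 2(\beta + 4)\, d \log\left(1 + \frac{4k}{d}\right)$. -/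
open Matrix Finset

section EluderAux

lemma vmv_psd {d : ℕ} (v : Fin d → ℝ) : (vecMulVec v v).PosSemidef := by
  have h : vecMulVec v v = (replicateRow (Fin 1) v)ᴴ * replicateRow (Fin 1) v := by
    rw [vecMulVec_eq (Fin 1), conjTranspose_replicateRow, star_trivial]
    exact rfl
  rw [h]
  exact posSemidef_conjTranspose_mul_self _

lemma vmv_mulVec {d : ℕ} (v x : Fin d → ℝ) : vecMulVec v v *ᵥ x = (v ⬝ᵥ x) • v := by
  ext i
  simp only [Matrix.mulVec, Matrix.vecMulVec_apply, dotProduct, Pi.smul_apply,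
    smul_eq_mul, Finset.sum_mul]
  exact Finset.sum_congr rfl fun j _ => by ring

lemma vmv_trace {d : ℕ} (v : Fin d → ℝ) : (vecMulVec v v).trace = v ⬝ᵥ v := by
  simp [Matrix.trace, Matrix.vecMulVec_apply, dotProduct, Matrix.diag]

noncomputable def Mk {d : ℕ} (φ : ℕ → (Fin d → ℝ)) (k : ℕ) : Matrix (Fin d) (Fin d) ℝ :=
  1 + ∑ i ∈ Finset.Icc 1 k, vecMulVec (φ i) (φ i)

lemma sum_psd {d : ℕ} (φ : ℕ → (Fin d → ℝ)) (s : Finset ℕ) :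
    (∑ i ∈ s, vecMulVec (φ i) (φ i)).PosSemidef := by
  classical
  induction s using Finset.induction with
  | empty => simpa using Matrix.PosSemidef.zero
  | insert a s h ih => rw [Finset.sum_insert h]; exact (vmv_psd _).add ih

lemma Mk_posdef {d : ℕ} (φ : ℕ → (Fin d → ℝ)) (k : ℕ) : (Mk φ k).PosDef :=
  Matrix.PosDef.add_posSemidef Matrix.PosDef.one (sum_psd φ _)

lemma Mk_symm {d : ℕ} (φ : ℕ → (Fin d → ℝ)) (k : ℕ) : (Mk φ k)ᵀ = Mk φ k :=
  (Mk_posdef φ k).isHermitian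

lemma Mk_succ {d : ℕ} (φ : ℕ → (Fin d → ℝ)) (k : ℕ) :
    Mk φ (k + 1) = Mk φ k + vecMulVec (φ (k+1)) (φ (k+1)) := by
  rw [Mk, Mk, Finset.sum_Icc_succ_top (Nat.le_add_left 1 k), add_assoc]

lemma sum_mulVec' {d : ℕ} {ι : Type*} (s : Finset ι) (A : ι → Matrix (Fin d) (Fin d) ℝ)
    (x : Fin d → ℝ) : (∑ i ∈ s, A i) *ᵥ x = ∑ i ∈ s, A i *ᵥ x := by
  ext j
  simp only [Matrix.mulVec, dotProduct, Matrix.sum_apply, Finset.sum_apply, Finset.sum_mul]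
  rw [Finset.sum_comm]

lemma dp_sum {d : ℕ} {ι : Type*} (s : Finset ι) (f : ι → (Fin d → ℝ)) (x : Fin d → ℝ) :
    x ⬝ᵥ (∑ i ∈ s, f i) = ∑ i ∈ s, x ⬝ᵥ f i := by
  simp only [dotProduct, Finset.sum_apply, Finset.mul_sum]
  rw [Finset.sum_comm]

lemma Mk_quad {d : ℕ} (φ : ℕ → (Fin d → ℝ)) (k : ℕ) (x : Fin d → ℝ) :
    x ⬝ᵥ (Mk φ k *ᵥ x) = x ⬝ᵥ x + ∑ i ∈ Finset.Icc 1 k, (φ i ⬝ᵥ x) ^ 2 := by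
  rw [Mk, Matrix.add_mulVec, dotProduct_add, Matrix.one_mulVec]
  congr 1
  rw [sum_mulVec', dp_sum]
  refine Finset.sum_congr rfl fun i _ => ?_
  rw [vmv_mulVec, dotProduct_smul, smul_eq_mul, dotProduct_comm, sq]

lemma Mk_trace {d : ℕ} (φ : ℕ → (Fin d → ℝ)) (k : ℕ) :
    (Mk φ k).trace = d + ∑ i ∈ Finset.Icc 1 k, φ i ⬝ᵥ φ i := by
  rw [Mk, Matrix.trace_add, Matrix.trace_one, Matrix.trace_sum]
  simp only [vmv_trace, Fintype.card_fin]

lemma cs_posdef {d : ℕ} {M : Matrix (Fin d) (Fin d) ℝ} (hM : M.PosDef)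
    (x y : Fin d → ℝ) :
    (x ⬝ᵥ y) ^ 2 ≤ (x ⬝ᵥ (M *ᵥ x)) * (y ⬝ᵥ (M⁻¹ *ᵥ y)) := by
  have hsymm : Mᵀ = M := hM.isHermitian
  have hMinv : (M⁻¹).PosDef := hM.inv
  have hdet : IsUnit M.det := isUnit_iff_ne_zero.mpr hM.det_pos.ne'
  have hxx : 0 ≤ x ⬝ᵥ (M *ᵥ x) := by simpa using hM.posSemidef.dotProduct_mulVec_nonneg x
  have hyy : 0 ≤ y ⬝ᵥ (M⁻¹ *ᵥ y) := by simpa using hMinv.posSemidef.dotProduct_mulVec_nonneg y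
  set w := y ⬝ᵥ (M⁻¹ *ᵥ y) with hw
  rcases eq_or_lt_of_le hyy with hw0 | hwpos
  · have h0 : M⁻¹ *ᵥ y = 0 :=
      (hMinv.posSemidef.dotProduct_mulVec_zero_iff y).mp (by simpa using hw0.symm)
    have hy0 : y = 0 := by
      have : M *ᵥ (M⁻¹ *ᵥ y) = M *ᵥ 0 := by rw [h0]
      rwa [Matrix.mulVec_mulVec, Matrix.mul_nonsing_inv _ hdet, Matrix.one_mulVec,
        Matrix.mulVec_zero] at this
    simp only [hy0, dotProduct_zero, ne_eq]
    rw [← hw0]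
    simp
  · set z := M⁻¹ *ᵥ y with hz
    have hMz : M *ᵥ z = y := by
      rw [hz, Matrix.mulVec_mulVec, Matrix.mul_nonsing_inv _ hdet, Matrix.one_mulVec]
    have hzy : z ⬝ᵥ y = w := by rw [dotProduct_comm, hw]
    have hzMx : z ⬝ᵥ (M *ᵥ x) = y ⬝ᵥ x := by
      rw [dotProduct_mulVec, ← Matrix.mulVec_transpose, hsymm, hMz]
    set t := (x ⬝ᵥ y) / w with ht
    have key : 0 ≤ (x - t • z) ⬝ᵥ (M *ᵥ (x - t • z)) := by
      simpa using hM.posSemidef.dotProduct_mulVec_nonneg (x - t • z)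
    have expand : (x - t • z) ⬝ᵥ (M *ᵥ (x - t • z))
        = x ⬝ᵥ (M *ᵥ x) - 2 * (t * (x ⬝ᵥ y)) + t ^ 2 * w := by
      rw [Matrix.mulVec_sub, Matrix.mulVec_smul, sub_dotProduct, dotProduct_sub,
        dotProduct_sub, smul_dotProduct, dotProduct_smul, dotProduct_smul, smul_dotProduct]
      rw [hMz, hzMx, hzy]
      have hc : y ⬝ᵥ x = x ⬝ᵥ y := dotProduct_comm y x
      simp only [smul_eq_mul]
      rw [hc]; ring
    rw [expand] at key
    have h1 : t * (x ⬝ᵥ y) = (x ⬝ᵥ y) ^ 2 / w := by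
      rw [ht]; field_simp
    have h2 : t ^ 2 * w = (x ⬝ᵥ y) ^ 2 / w := by
      rw [ht]; field_simp
    have key' : (x ⬝ᵥ y) ^ 2 / w ≤ x ⬝ᵥ (M *ᵥ x) := by nlinarith [key, h1, h2]
    exact (div_le_iff₀ hwpos).mp key'

lemma det_rank_one_update {d : ℕ} {M : Matrix (Fin d) (Fin d) ℝ} (hdet : IsUnit M.det)
    (hsymm : Mᵀ = M) (v : Fin d → ℝ) :
    (M + vecMulVec v v).det = M.det * (1 + v ⬝ᵥ (M⁻¹ *ᵥ v)) := by
  have hinvT : (M⁻¹)ᵀ = M⁻¹ := by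
    rw [Matrix.transpose_nonsing_inv, hsymm]
  have hinv : ∀ i j, M⁻¹ i j = M⁻¹ j i := fun i j => by
    conv_lhs => rw [← hinvT, Matrix.transpose_apply]
  rw [vecMulVec_eq (Fin 1), Matrix.det_add_replicateCol_mul_replicateRow (ι := Fin 1) hdet v v]
  congr 1
  simp only [Matrix.det_unique]
  simp [Matrix.mul_apply, Matrix.replicateRow_apply, Matrix.replicateCol_apply, dotProduct, Matrix.mulVec,
    Finset.mul_sum, mul_comm]
  refine Finset.sum_congr rfl fun i _ => Finset.sum_congr rfl fun j _ => ?_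
  rw [hinv]

lemma trace_eq_sum_eig {d : ℕ} {A : Matrix (Fin d) (Fin d) ℝ} (hH : A.IsHermitian) :
    A.trace = ∑ i, hH.eigenvalues i := by
  simpa using hH.trace_eq_sum_eigenvalues

lemma det_le_pow_trace' {d : ℕ} (hd : 0 < d) {A : Matrix (Fin d) (Fin d) ℝ} (hA : A.PosDef) :
    A.det ≤ (A.trace / d) ^ d := by
  have hH := hA.isHermitian
  have hpos : ∀ i, 0 < hH.eigenvalues i := fun i => hA.eigenvalues_pos i
  have hdet : A.det = ∏ i, hH.eigenvalues i := by
    simpa using hH.det_eq_prod_eigenvalues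
  have htr : A.trace = ∑ i, hH.eigenvalues i := trace_eq_sum_eig hH
  have hdR : (0:ℝ) < d := Nat.cast_pos.mpr hd
  have hgm : ∏ i, (hH.eigenvalues i) ^ ((d:ℝ)⁻¹) ≤ ∑ i, (d:ℝ)⁻¹ * hH.eigenvalues i := by
    apply Real.geom_mean_le_arith_mean_weighted
    · intro i _; positivity
    · simp [Finset.card_univ]
      field_simp
    · intro i _; exact (hpos i).le
  have h1 : (∏ i, (hH.eigenvalues i) ^ ((d:ℝ)⁻¹)) ^ d = ∏ i, hH.eigenvalues i := by
    rw [← Finset.prod_pow]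
    refine Finset.prod_congr rfl fun i _ => ?_
    rw [← Real.rpow_natCast ((hH.eigenvalues i) ^ ((d:ℝ)⁻¹)) d, ← Real.rpow_mul (hpos i).le]
    rw [inv_mul_cancel₀ hdR.ne', Real.rpow_one]
  have h2 : ∑ i, (d:ℝ)⁻¹ * hH.eigenvalues i = A.trace / d := by
    rw [htr, ← Finset.mul_sum]
    ring
  rw [hdet, ← h1, h2.symm]
  apply pow_le_pow_left₀ (Finset.prod_nonneg fun i _ => Real.rpow_nonneg (hpos i).le _) hgm

lemma min_le_two_log {u : ℝ} (hu : 0 ≤ u) : min u 1 ≤ 2 * Real.log (1 + u) := by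
  have h1u : (0:ℝ) < 1 + u := by linarith
  rcases le_or_gt u 1 with h1 | h1
  · rw [min_eq_left h1]
    have hexp : Real.exp (u / 2) ≤ 1 + u := by
      have ha : 1 - u / 2 ≤ Real.exp (-(u / 2)) := by
        have := Real.add_one_le_exp (-(u / 2)); linarith
      have hb : Real.exp (u / 2) * Real.exp (-(u / 2)) = 1 := by
        rw [← Real.exp_add]; simp
      have hc : Real.exp (u / 2) * (1 - u / 2) ≤ 1 := by
        nlinarith [Real.exp_pos (u / 2)]
      nlinarith [Real.exp_pos (u / 2)]
    have := (Real.le_log_iff_exp_le h1u).mpr hexp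
    linarith
  · rw [min_eq_right h1.le]
    have e2 : Real.exp (1/2) ^ 2 = Real.exp 1 := by
      rw [sq, ← Real.exp_add]; norm_num
    have h2 : Real.exp (1 / 2) ≤ 1 + u := by
      have h3 := Real.exp_one_lt_d9
      nlinarith [Real.exp_pos (1/2)]
    have := (Real.le_log_iff_exp_le h1u).mpr h2
    linarith

end EluderAux

theorem stmt_16 (d K : ℕ) (hd : 0 < d) (β : ℝ) (hβ : 0 < β)
    (φ : ℕ → (Fin d → ℝ)) (θ : ℕ → (Fin d → ℝ)) (θs : Fin d → ℝ)
    (hφ : ∀ i, Real.sqrt (φ i ⬝ᵥ φ i) ≤ 1)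
    (hθ : ∀ i, Real.sqrt (θ i ⬝ᵥ θ i) ≤ 1)
    (hθs : Real.sqrt (θs ⬝ᵥ θs) ≤ 1)
    (h : ∀ k ∈ Finset.Icc 1 K,
      ∑ i ∈ Finset.Icc 1 (k - 1), ((θ k - θs) ⬝ᵥ φ i) ^ 2 ≤ β) :
    ∀ k ∈ Finset.Icc 1 K,
      ∑ i ∈ Finset.Icc 1 k, ((θ i - θs) ⬝ᵥ φ i) ^ 2
        ≤ 2 * (β + 4) * d * Real.log (1 + 4 * k / d) := by
  classical
  have hdR : (0:ℝ) < d := Nat.cast_pos.mpr hd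
  -- squared norm bounds
  have hself : ∀ v : Fin d → ℝ, 0 ≤ v ⬝ᵥ v := fun v =>
    Finset.sum_nonneg fun i _ => mul_self_nonneg _
  have sq_of_sqrt : ∀ v : Fin d → ℝ, Real.sqrt (v ⬝ᵥ v) ≤ 1 → v ⬝ᵥ v ≤ 1 := by
    intro v hv
    have := Real.sq_sqrt (hself v)
    nlinarith [Real.sqrt_nonneg (v ⬝ᵥ v)]
  have hφ1 : ∀ i, φ i ⬝ᵥ φ i ≤ 1 := fun i => sq_of_sqrt _ (hφ i)
  have hθ1 : ∀ i, θ i ⬝ᵥ θ i ≤ 1 := fun i => sq_of_sqrt _ (hθ i)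
  have hθs1 : θs ⬝ᵥ θs ≤ 1 := sq_of_sqrt _ hθs
  -- CS for plain dot products
  have dcs : ∀ a b : Fin d → ℝ, (a ⬝ᵥ b) ^ 2 ≤ (a ⬝ᵥ a) * (b ⬝ᵥ b) := by
    intro a b
    simpa [dotProduct, sq, Finset.sum_mul_sq_le_sq_mul_sq] using
      Finset.sum_mul_sq_le_sq_mul_sq Finset.univ a b
  have hdiff : ∀ k, (θ k - θs) ⬝ᵥ (θ k - θs) ≤ 4 := by
    intro k
    have hexp : (θ k - θs) ⬝ᵥ (θ k - θs)
        = θ k ⬝ᵥ θ k - 2 * (θ k ⬝ᵥ θs) + θs ⬝ᵥ θs := by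
      rw [sub_dotProduct, dotProduct_sub, dotProduct_sub]
      have : θs ⬝ᵥ θ k = θ k ⬝ᵥ θs := dotProduct_comm _ _
      rw [this]; ring
    have hcs := dcs (θ k) θs
    have hsq1 : (θ k ⬝ᵥ θs) ^ 2 ≤ 1 := by nlinarith [hself (θ k), hself θs, hθ1 k, hθs1]
    nlinarith [hθ1 k, hθs1, sq_nonneg (θ k ⬝ᵥ θs + 1)]
  -- the elliptical potential machinery
  set w : ℕ → ℝ := fun i => φ i ⬝ᵥ ((Mk φ (i-1))⁻¹ *ᵥ φ i) with hwdef
  have hw_nonneg : ∀ i, 0 ≤ w i := by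
    intro i
    simpa using (Mk_posdef φ (i-1)).inv.posSemidef.dotProduct_mulVec_nonneg (φ i)
  -- per-step bound
  have step : ∀ k ∈ Finset.Icc 1 K,
      ((θ k - θs) ⬝ᵥ φ k) ^ 2 ≤ (β + 4) * min (w k) 1 := by
    intro k hk
    have hquad : (θ k - θs) ⬝ᵥ (Mk φ (k-1) *ᵥ (θ k - θs)) ≤ 4 + β := by
      rw [Mk_quad]
      have h2 : ∑ i ∈ Finset.Icc 1 (k - 1), (φ i ⬝ᵥ (θ k - θs)) ^ 2 ≤ β := by
        refine le_trans (le_of_eq ?_) (h k hk)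
        exact Finset.sum_congr rfl fun i _ => by rw [dotProduct_comm]
      linarith [hdiff k]
    have hcs1 : ((θ k - θs) ⬝ᵥ φ k) ^ 2
        ≤ ((θ k - θs) ⬝ᵥ (Mk φ (k-1) *ᵥ (θ k - θs))) * w k :=
      cs_posdef (Mk_posdef φ (k-1)) (θ k - θs) (φ k)
    have hb1 : ((θ k - θs) ⬝ᵥ φ k) ^ 2 ≤ (β + 4) * w k := by
      calc ((θ k - θs) ⬝ᵥ φ k) ^ 2
          ≤ ((θ k - θs) ⬝ᵥ (Mk φ (k-1) *ᵥ (θ k - θs))) * w k := hcs1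
        _ ≤ (β + 4) * w k := by
            apply mul_le_mul_of_nonneg_right _ (hw_nonneg k)
            linarith [hquad]
    have hb2 : ((θ k - θs) ⬝ᵥ φ k) ^ 2 ≤ (β + 4) * 1 := by
      have := dcs (θ k - θs) (φ k)
      nlinarith [hdiff k, hφ1 k, hself (θ k - θs), hself (φ k)]
    rcases le_total (w k) 1 with hmin | hmin
    · rw [min_eq_left hmin]; exact hb1
    · rw [min_eq_right hmin]; exact hb2
  -- determinant product formula
  have detprod : ∀ k : ℕ, (Mk φ k).det = ∏ i ∈ Finset.Icc 1 k, (1 + w i) := by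
    intro k
    induction k with
    | zero => simp [Mk]
    | succ n ih =>
      rw [Mk_succ, det_rank_one_update
          (isUnit_iff_ne_zero.mpr (Mk_posdef φ n).det_pos.ne') (Mk_symm φ n) (φ (n+1)),
        ih, Finset.prod_Icc_succ_top (Nat.le_add_left 1 n)]
      simp [hwdef]
  -- main chain
  intro k hk
  have hklb := (Finset.mem_Icc.mp hk).1
  calc ∑ i ∈ Finset.Icc 1 k, ((θ i - θs) ⬝ᵥ φ i) ^ 2
      ≤ ∑ i ∈ Finset.Icc 1 k, (β + 4) * min (w i) 1 := by
        refine Finset.sum_le_sum fun i hi => ?_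
        have hiK : i ∈ Finset.Icc 1 K := by
          rw [Finset.mem_Icc] at hi hk ⊢
          exact ⟨hi.1, le_trans hi.2 hk.2⟩
        exact step i hiK
    _ ≤ ∑ i ∈ Finset.Icc 1 k, (β + 4) * (2 * Real.log (1 + w i)) := by
        refine Finset.sum_le_sum fun i _ => ?_
        exact mul_le_mul_of_nonneg_left (min_le_two_log (hw_nonneg i)) (by linarith)
    _ = 2 * (β + 4) * ∑ i ∈ Finset.Icc 1 k, Real.log (1 + w i) := by
        rw [Finset.mul_sum]; exact Finset.sum_congr rfl fun i _ => by ring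
    _ = 2 * (β + 4) * Real.log ((Mk φ k).det) := by
        have hne : ∀ i ∈ Finset.Icc 1 k, (1:ℝ) + w i ≠ 0 := fun i _ => by
          nlinarith [hw_nonneg i]
        rw [detprod k, Real.log_prod hne]
    _ ≤ 2 * (β + 4) * (d * Real.log (1 + 4 * k / d)) := by
        apply mul_le_mul_of_nonneg_left _ (by linarith)
        have htrnn : (0:ℝ) ≤ (Mk φ k).trace := by
          rw [Mk_trace]
          have : 0 ≤ ∑ i ∈ Finset.Icc 1 k, φ i ⬝ᵥ φ i :=
            Finset.sum_nonneg fun i _ => hself _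
          positivity
        have htr : (Mk φ k).trace ≤ (d : ℝ) + k := by
          rw [Mk_trace]
          have hsum : ∑ i ∈ Finset.Icc 1 k, φ i ⬝ᵥ φ i ≤ (k : ℝ) := by
            calc ∑ i ∈ Finset.Icc 1 k, φ i ⬝ᵥ φ i
                ≤ ∑ i ∈ Finset.Icc 1 k, (1:ℝ) := Finset.sum_le_sum fun i _ => hφ1 i
              _ = (k : ℝ) := by simp
          linarith
        have hdet_le : (Mk φ k).det ≤ ((d + k : ℝ) / d) ^ d := by
          refine le_trans (det_le_pow_trace' hd (Mk_posdef φ k)) ?_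
          apply pow_le_pow_left₀ (by positivity)
          gcongr
        have hfrac : ((d:ℝ) + k) / d = 1 + (k:ℝ)/d := by field_simp
        have hlog1 : Real.log ((Mk φ k).det) ≤ (d:ℝ) * Real.log (1 + (k:ℝ)/d) := by
          have := Real.log_le_log (Mk_posdef φ k).det_pos hdet_le
          rwa [Real.log_pow, hfrac] at this
        have hlog2 : Real.log (1 + (k:ℝ)/d) ≤ Real.log (1 + 4 * (k:ℝ)/d) := by
          apply Real.log_le_log (by positivity)
          have : (k:ℝ)/d ≤ 4 * (k:ℝ)/d := by
            rw [mul_div_assoc]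
            nlinarith [div_nonneg (Nat.cast_nonneg k) hdR.le]
          linarith
        calc Real.log ((Mk φ k).det) ≤ (d:ℝ) * Real.log (1 + (k:ℝ)/d) := hlog1
          _ ≤ (d:ℝ) * Real.log (1 + 4 * (k:ℝ)/d) :=
              mul_le_mul_of_nonneg_left hlog2 hdR.le
    _ = 2 * (β + 4) * d * Real.log (1 + 4 * k / d) := by ring
end

section
/- Let $a_1, \dots, a_K$ be nonnegative reals bounded by $R^2$, let $\beta \ge R^2$, $d \ge 1$, and suppose that whenever we sort the sequence in decreasing order as $e_1 \ge \dots \ge e_K$, we have: for every $\alpha > 0$ and every $t$, if $e_t > \alpha$ then $t \le (\beta/\alpha + 1) d$. Then $\sum_{i=1}^{K} a_i \le 1 + d R^2 + 2 d \beta \log K$ (taking threshold $\omega = 1/K$). -/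
open Finset

private lemma harm_le (K n : ℕ) (hK : 2 ≤ K) (hn : n ≤ K - 1) :
    (harmonic n : ℝ) ≤ 2 * Real.log K := by
  have hKpos : (0:ℝ) < K := by positivity
  have hlogK : 0 < Real.log K := Real.log_pos (by exact_mod_cast hK)
  rcases Nat.eq_zero_or_pos n with h0 | hpos
  · simp [h0]; positivity
  · have h1 : (harmonic n : ℝ) ≤ 1 + Real.log n := harmonic_le_one_add_log n
    have h2 : 1 + Real.log n ≤ 2 * Real.log K := by
      have : 1 + Real.log n = Real.log (Real.exp 1 * n) := by
        rw [Real.log_mul (Real.exp_ne_zero 1) (by positivity), Real.log_exp]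
      rw [this, two_mul, ← Real.log_mul (ne_of_gt hKpos) (ne_of_gt hKpos)]
      apply Real.log_le_log (by positivity)
      have he : Real.exp 1 ≤ 3 := (Real.exp_one_lt_d9).le.trans (by norm_num)
      have hnn : (n:ℝ) + 1 ≤ (K:ℝ) := by
        have h1 : n + 1 ≤ K := by omega
        exact_mod_cast h1
      have hn0 : (0:ℝ) < (n:ℝ) := by exact_mod_cast hpos
      have hK2 : (2:ℝ) ≤ (K:ℝ) := by exact_mod_cast hK
      nlinarith [sq_nonneg ((K:ℝ) - 2), mul_nonneg (sub_nonneg.mpr he) hn0.le]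
    linarith

theorem stmt_18 (K d : ℕ) (hK : 2 ≤ K) (hd : 1 ≤ d) (R β : ℝ) (hR : 0 < R)
    (hβ : R ^ 2 ≤ β) (a : ℕ → ℝ) (hnn : ∀ i, 0 ≤ a i)
    (hbound : ∀ i, a i ≤ R ^ 2)
    (hcount : ∀ α : ℝ, 0 < α →
      (((Finset.Icc 1 K).filter (fun i => α < a i)).card : ℝ) ≤ (β / α + 1) * d) :
    ∑ i ∈ Finset.Icc 1 K, a i ≤ 1 + d * R ^ 2 + 2 * d * β * Real.log K := by
  have hβ0 : 0 < β := lt_of_lt_of_le (by positivity) hβ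
  have hd0 : (0:ℝ) < d := by exact_mod_cast hd
  -- rank function
  set S : ℕ → Finset ℕ :=
    fun i => (Finset.Icc 1 K).filter (fun j => a i < a j ∨ (a j = a i ∧ j ≤ i)) with hS
  set r : ℕ → ℕ := fun i => (S i).card with hr
  have hself : ∀ i ∈ Finset.Icc 1 K, i ∈ S i := by
    intro i hi
    simp only [hS, Finset.mem_filter]
    refine ⟨hi, Or.inr ?_⟩
    simp
  have hmono : ∀ i ∈ Finset.Icc 1 K, ∀ i' ∈ Finset.Icc 1 K,
      (a i' < a i ∨ (a i = a i' ∧ i < i')) → r i < r i' := by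
    intro i hi i' hi' hlex
    have hsub : S i ⊆ S i' := by
      intro j hj
      simp only [hS, Finset.mem_filter] at hj ⊢
      refine ⟨hj.1, ?_⟩
      rcases hlex with h | ⟨he, hlt⟩
      · rcases hj.2 with h2 | ⟨h2, _⟩
        · exact Or.inl (lt_trans h h2)
        · exact Or.inl (h2 ▸ h)
      · rcases hj.2 with h2 | ⟨h2, hle⟩
        · exact Or.inl (he ▸ h2)
        · exact Or.inr ⟨he ▸ h2, le_trans hle (le_of_lt hlt)⟩
    have hmem : i' ∈ S i' := hself i' hi'
    have hnmem : i' ∉ S i := by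
      simp only [hS, Finset.mem_filter]
      rintro ⟨-, h | ⟨he, hle⟩⟩
      · rcases hlex with h' | ⟨he', hlt⟩
        · exact absurd h (not_lt.mpr (le_of_lt h'))
        · exact absurd h (not_lt.mpr (le_of_eq he'.symm))
      · rcases hlex with h' | ⟨he', hlt⟩
        · exact absurd he (ne_of_lt h')
        · exact absurd hle (not_le.mpr hlt)
    exact Finset.card_lt_card (Finset.ssubset_iff_of_subset hsub |>.mpr ⟨i', hmem, hnmem⟩)
  have hinj : ∀ i ∈ Finset.Icc 1 K, ∀ i' ∈ Finset.Icc 1 K, r i = r i' → i = i' := by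
    intro i hi i' hi' hre
    by_contra hne
    rcases lt_trichotomy (a i) (a i') with h | h | h
    · exact absurd hre (ne_of_gt (hmono i' hi' i hi (Or.inl h)))
    · rcases lt_or_gt_of_ne hne with hlt | hlt
      · exact absurd hre (ne_of_lt (hmono i hi i' hi' (Or.inr ⟨h, hlt⟩)))
      · exact absurd hre (ne_of_gt (hmono i' hi' i hi (Or.inr ⟨h.symm, hlt⟩)))
    · exact absurd hre (ne_of_lt (hmono i hi i' hi' (Or.inl h)))
  have hr1 : ∀ i ∈ Finset.Icc 1 K, 1 ≤ r i := by
    intro i hi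
    exact Finset.card_pos.mpr ⟨i, hself i hi⟩
  have hrK : ∀ i, r i ≤ K := by
    intro i
    calc (S i).card ≤ (Finset.Icc 1 K).card := Finset.card_filter_le _ _
    _ = K := by rw [Nat.card_Icc]; omega
  -- key inverted bound
  have hkey : ∀ i ∈ Finset.Icc 1 K, ((r i : ℝ) - d) * a i ≤ β * d := by
    intro i hi
    by_contra hcon
    push_neg at hcon
    have hai : 0 < a i := by
      rcases (hnn i).lt_or_eq with h | h
      · exact h
      · rw [← h] at hcon; simp at hcon; nlinarith
    have hrd : (0:ℝ) < (r i : ℝ) - d := by nlinarith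
    have hq : β * d / ((r i : ℝ) - d) < a i := by
      rw [div_lt_iff₀ hrd]; nlinarith
    set α := (β * d / ((r i : ℝ) - d) + a i) / 2 with hα
    have hα0 : 0 < α := by
      have : 0 ≤ β * d / ((r i : ℝ) - d) := by positivity
      positivity
    have hαlt : α < a i := by rw [hα]; linarith
    have hαgt : β * d / ((r i : ℝ) - d) < α := by rw [hα]; linarith
    have hsub : S i ⊆ (Finset.Icc 1 K).filter (fun j => α < a j) := by
      intro j hj
      simp only [hS, Finset.mem_filter] at hj ⊢
      refine ⟨hj.1, ?_⟩
      rcases hj.2 with h | ⟨h, _⟩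
      · linarith
      · linarith [h ▸ hαlt]
    have h1 : (r i : ℝ) ≤ (β / α + 1) * d := by
      calc (r i : ℝ) ≤ (((Finset.Icc 1 K).filter (fun j => α < a j)).card : ℝ) := by
            exact_mod_cast Finset.card_le_card hsub
      _ ≤ (β / α + 1) * d := hcount α hα0
    have h2 : (β / α + 1) * d < (r i : ℝ) := by
      have : β * d < α * ((r i : ℝ) - d) := by
        rw [div_lt_iff₀ hrd] at hαgt; linarith
      have hβα : β / α < ((r i : ℝ) - d) / d := by
        rw [div_lt_div_iff₀ hα0 hd0]; nlinarith
      calc (β / α + 1) * d < (((r i : ℝ) - d) / d + 1) * d := by nlinarith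
      _ = (r i : ℝ) := by field_simp; ring
    linarith
  -- pointwise bound by f ∘ r
  set f : ℕ → ℝ := fun t => if t ≤ d then R ^ 2 else β * d / ((t : ℝ) - d) with hf
  have hfnn : ∀ t, 0 ≤ f t := by
    intro t
    simp only [hf]
    split
    · positivity
    · next h =>
      have : (d:ℝ) < (t:ℝ) := by exact_mod_cast Nat.lt_of_not_le h
      have : (0:ℝ) < (t:ℝ) - d := by linarith
      positivity
  have hptw : ∀ i ∈ Finset.Icc 1 K, a i ≤ f (r i) := by
    intro i hi
    simp only [hf]
    split
    · exact hbound i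
    · next h =>
      have hdt : (d:ℝ) < (r i : ℝ) := by exact_mod_cast Nat.lt_of_not_le h
      have hpos : (0:ℝ) < (r i : ℝ) - d := by linarith
      rw [le_div_iff₀ hpos]
      calc a i * ((r i:ℝ) - d) = ((r i:ℝ) - d) * a i := mul_comm _ _
      _ ≤ β * d := hkey i hi
  -- sum over image of ranks
  have s1 : ∑ i ∈ Finset.Icc 1 K, a i ≤ ∑ i ∈ Finset.Icc 1 K, f (r i) :=
    Finset.sum_le_sum hptw
  have s2 : ∑ i ∈ Finset.Icc 1 K, f (r i)
      = ∑ t ∈ (Finset.Icc 1 K).image r, f t :=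
    (Finset.sum_image (fun i hi i' hi' h => hinj i hi i' hi' h)).symm
  have s3 : ∑ t ∈ (Finset.Icc 1 K).image r, f t ≤ ∑ t ∈ Finset.Icc 1 K, f t := by
    apply Finset.sum_le_sum_of_subset_of_nonneg
    · intro t ht
      rcases Finset.mem_image.mp ht with ⟨i, hi, rfl⟩
      exact Finset.mem_Icc.mpr ⟨hr1 i hi, hrK i⟩
    · intro t _ _; exact hfnn t
  -- evaluate the sum of f
  have split : ∑ t ∈ Finset.Icc 1 K, f t
      = ∑ t ∈ (Finset.Icc 1 K).filter (· ≤ d), R ^ 2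
        + ∑ t ∈ Finset.Icc (d+1) K, β * d / ((t:ℝ) - d) := by
    rw [← Finset.sum_filter_add_sum_filter_not (Finset.Icc 1 K) (· ≤ d) f]
    congr 1
    · apply Finset.sum_congr rfl
      intro t ht
      simp only [Finset.mem_filter] at ht
      simp [hf, ht.2]
    · have heq : (Finset.Icc 1 K).filter (fun t => ¬ t ≤ d) = Finset.Icc (d+1) K := by
        ext t
        simp only [Finset.mem_filter, Finset.mem_Icc]
        omega
      rw [heq]
      apply Finset.sum_congr rfl
      intro t ht
      simp only [Finset.mem_Icc] at ht
      simp [hf, Nat.not_le.mpr (by omega : d < t)]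
  have part1 : ∑ t ∈ (Finset.Icc 1 K).filter (· ≤ d), R ^ 2 ≤ d * R ^ 2 := by
    rw [Finset.sum_const, nsmul_eq_mul]
    have hcard : ((Finset.Icc 1 K).filter (· ≤ d)).card ≤ d := by
      have : (Finset.Icc 1 K).filter (· ≤ d) ⊆ Finset.Icc 1 d := by
        intro t ht
        simp only [Finset.mem_filter, Finset.mem_Icc] at ht ⊢
        omega
      calc _ ≤ (Finset.Icc 1 d).card := Finset.card_le_card this
      _ = d := by rw [Nat.card_Icc]; omega
    have : (((Finset.Icc 1 K).filter (· ≤ d)).card : ℝ) ≤ (d:ℝ) := by exact_mod_cast hcard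
    nlinarith [sq_nonneg R]
  have part2 : ∑ t ∈ Finset.Icc (d+1) K, β * d / ((t:ℝ) - d)
      ≤ β * d * (2 * Real.log K) := by
    have himg : Finset.Icc (d+1) K = (Finset.Icc 1 (K - d)).image (· + d) := by
      ext t
      simp only [Finset.mem_image, Finset.mem_Icc]
      constructor
      · intro ⟨h1, h2⟩; exact ⟨t - d, by omega, by omega⟩
      · rintro ⟨s, hs, rfl⟩; omega
    rw [himg, Finset.sum_image (fun x _ y _ h => by omega)]
    have : ∀ s ∈ Finset.Icc 1 (K - d), β * d / (((s + d : ℕ):ℝ) - d) = β * d * (s:ℝ)⁻¹ := by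
      intro s hs
      have : ((s + d : ℕ):ℝ) - d = (s:ℝ) := by push_cast; ring
      rw [this, div_eq_mul_inv]
    rw [Finset.sum_congr rfl this, ← Finset.mul_sum]
    have hharm : ∑ s ∈ Finset.Icc 1 (K - d), ((s:ℝ))⁻¹ = (harmonic (K - d) : ℝ) := by
      rw [harmonic_eq_sum_Icc]
      push_cast
      rfl
    rw [hharm]
    have := harm_le K (K - d) hK (by omega)
    have hβd : 0 ≤ β * d := by positivity
    nlinarith
  have hlogK : 0 < Real.log K := Real.log_pos (by exact_mod_cast hK)
  calc ∑ i ∈ Finset.Icc 1 K, a i ≤ ∑ t ∈ Finset.Icc 1 K, f t := by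
        rw [← s2] at s3; linarith
  _ = _ := split
  _ ≤ d * R ^ 2 + β * d * (2 * Real.log K) := by linarith
  _ ≤ 1 + d * R ^ 2 + 2 * d * β * Real.log K := by nlinarith
end
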